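/- For every real α and every real x the following three matrix identities hold: (i) L_μ^{(α)}(x) · J = ( x(A_μ+I)^{−1} − xI + (αI+J)A_μ + J ) · L_μ^{(α)}(x); (ii) J · L_μ^{(α)}(x) = L_μ^{(α)}(x) · ( J − (αI + J − xI)A_μ − x A_μ² ); (iii) (I + A_μ) · L_μ^{(α)}(x) · (I − A_μ) = L_μ^{(α)}(x). -/

import Mathlib

open scoped BigOperators
open Matrix MeasureTheory

noncomputable section

/-- Pochhammer symbol `(a)_m = a(a+1)⋯(a+m-1)`. -/
def poch (a : ℝ) (m : ℕ) : ℝ := ∏ i ∈ Finset.range m, (a + i)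

/-- Generalized Laguerre polynomial `L_n^{(α)}(x)`. -/
def lagP (α : ℝ) (n : ℕ) (x : ℝ) : ℝ :=
  ∑ k ∈ Finset.range (n + 1),
    (-1 : ℝ) ^ k * poch (α + k + 1) (n - k) * x ^ k / ((n - k).factorial * k.factorial)

/-- The matrix `L_μ^{(α)}(x)`; the 0-based index pair `(i,j)` corresponds to the
1-based index pair `(i+1, j+1)` of the paper. -/
def LagMat (N : ℕ) (μ : Fin N → ℝ) (α : ℝ) (x : ℝ) : Matrix (Fin N) (Fin N) ℝ :=
  Matrix.of fun m n : Fin N =>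
    if (n : ℕ) ≤ (m : ℕ) then μ m / μ n * lagP (α + (n : ℕ) + 1) ((m : ℕ) - (n : ℕ)) x else 0

/-- The matrix `A_μ = S_μ A S_μ⁻¹`, written entrywise. -/
def AmuMat (N : ℕ) (μ : Fin N → ℝ) : Matrix (Fin N) (Fin N) ℝ :=
  Matrix.of fun i j : Fin N => if (i : ℕ) = (j : ℕ) + 1 then -(μ i / μ j) else 0

/-- `J = diag(1,…,N)`. -/
def Jmat (N : ℕ) : Matrix (Fin N) (Fin N) ℝ :=
  Matrix.diagonal fun i => ((i : ℕ) + 1 : ℝ)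

/-- `T^{(ν)}(x) = e^{-x} Σ_k δ_k x^{ν+k} E_{k,k}`. -/
def Tmat (N : ℕ) (δ : Fin N → ℝ) (ν : ℝ) (x : ℝ) : Matrix (Fin N) (Fin N) ℝ :=
  Matrix.diagonal fun k => Real.exp (-x) * δ k * x ^ (ν + (k : ℕ) + 1)

/-- The weight `W_μ^{(α,ν)}(x) = L_μ^{(α)}(x) T^{(ν)}(x) L_μ^{(α)}(x)^*`. -/
def Wmat (N : ℕ) (μ δ : Fin N → ℝ) (α ν : ℝ) (x : ℝ) : Matrix (Fin N) (Fin N) ℝ :=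
  LagMat N μ α x * Tmat N δ ν x * (LagMat N μ α x)ᵀ

/-- Entrywise evaluation of a matrix of polynomials. -/
def matPolyEval {N : ℕ} (P : Matrix (Fin N) (Fin N) (Polynomial ℝ)) (x : ℝ) :
    Matrix (Fin N) (Fin N) ℝ :=
  Matrix.of fun i j => (P i j).eval x

/-- Entrywise derivative of a matrix of polynomials. -/
def matPolyDeriv {N : ℕ} (P : Matrix (Fin N) (Fin N) (Polynomial ℝ)) :
    Matrix (Fin N) (Fin N) (Polynomial ℝ) :=
  Matrix.of fun i j => Polynomial.derivative (P i j)

/-- `P` is the monic (matrix valued) orthogonal polynomial of degree `n` w.r.t. the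
weight `W` on `(0,∞)`. -/
def MonicOrth (N : ℕ) (W : ℝ → Matrix (Fin N) (Fin N) ℝ) (n : ℕ)
    (P : Matrix (Fin N) (Fin N) (Polynomial ℝ)) : Prop :=
  (∀ i j, (P i j).degree ≤ n) ∧
  Matrix.of (fun i j => (P i j).coeff n) = (1 : Matrix (Fin N) (Fin N) ℝ) ∧
  ∀ k, k < n → ∀ i j, (∫ x in Set.Ioi (0 : ℝ), (matPolyEval P x * W x) i j * x ^ k) = 0

/-- Conditions (C1) and (C2) at level `ν`, relating `δ = δ^{(ν)}`, `δ' = δ^{(ν+1)}`,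
`c = c^{(ν)}` and `d = d^{(ν)}`. -/
def PearsonCond (N : ℕ) (μ δ δ' : Fin N → ℝ) (c d : ℝ) : Prop :=
  0 < c ∧ 0 < d ∧
  (∀ k : Fin N, δ' k = (((k : ℕ) + 1) * d + c) * δ k) ∧
  ∀ (k : Fin N) (h : (k : ℕ) + 1 < N),
    μ ⟨(k : ℕ) + 1, h⟩ ^ 2 / μ k ^ 2 =
      d * ((k : ℕ) + 1) * ((N : ℝ) - ((k : ℕ) + 1)) * δ ⟨(k : ℕ) + 1, h⟩ / δ' k

/-- `Φ^{(α,ν)}(x)` (with `c = c^{(ν)}`, `d = d^{(ν)}`). -/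
def PhiMat (N : ℕ) (μ : Fin N → ℝ) (α c d : ℝ) (x : ℝ) : Matrix (Fin N) (Fin N) ℝ :=
  ((LagMat N μ α 0)ᵀ)⁻¹ *
    (-(d * x ^ 2) • (AmuMat N μ)ᵀ + x • (d • Jmat N + c • (1 : Matrix (Fin N) (Fin N) ℝ))) *
    (LagMat N μ α 0)ᵀ

/-- `Ψ^{(α,ν)}(x)` (with `δ = δ^{(ν)}`, `δ' = δ^{(ν+1)}`, `c = c^{(ν)}`, `d = d^{(ν)}`). -/
def PsiMat (N : ℕ) (μ δ δ' : Fin N → ℝ) (α ν c d : ℝ) (x : ℝ) : Matrix (Fin N) (Fin N) ℝ :=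
  ((LagMat N μ α 0)ᵀ)⁻¹ *
    (x • (d • (Jmat N - (AmuMat N μ)ᵀ * (Jmat N + (ν + 1) • (1 : Matrix (Fin N) (Fin N) ℝ)) -
        ((N : ℝ) + 1) • (1 : Matrix (Fin N) (Fin N) ℝ)) - c • (1 : Matrix (Fin N) (Fin N) ℝ)) +
      (Jmat N + (ν + 1) • (1 : Matrix (Fin N) (Fin N) ℝ)) *
        (d • Jmat N + c • (1 : Matrix (Fin N) (Fin N) ℝ)) +
      (Matrix.diagonal δ)⁻¹ * AmuMat N μ * Matrix.diagonal δ') *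
    (LagMat N μ α 0)ᵀ

/-- `K_n^{(β,ν)}` (with `c = c^{(ν)}`, `d = d^{(ν)}`). -/
def Kmat (N : ℕ) (μ : Fin N → ℝ) (β ν c d : ℝ) (n : ℕ) : Matrix (Fin N) (Fin N) ℝ :=
  LagMat N μ β 0 *
    (d • (Jmat N - (Jmat N + (ν + n) • (1 : Matrix (Fin N) (Fin N) ℝ)) * AmuMat N μ -
      ((N : ℝ) + 1) • (1 : Matrix (Fin N) (Fin N) ℝ)) - c • (1 : Matrix (Fin N) (Fin N) ℝ)) *
    (LagMat N μ β 0)⁻¹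

/-- `(Q D^{(α,ν)})(x)` for a matrix valued polynomial `Q`. -/
def Dapply (N : ℕ) (μ : Fin N → ℝ) (α ν : ℝ)
    (Q : Matrix (Fin N) (Fin N) (Polynomial ℝ)) (x : ℝ) : Matrix (Fin N) (Fin N) ℝ :=
  x • matPolyEval (matPolyDeriv (matPolyDeriv Q)) x +
    matPolyEval (matPolyDeriv Q) x *
      ((-x) • (AmuMat N μ + 1)⁻¹ + (ν + 1) • (1 : Matrix (Fin N) (Fin N) ℝ) + Jmat N +
        (α • (1 : Matrix (Fin N) (Fin N) ℝ) + Jmat N) * AmuMat N μ) +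
    matPolyEval Q x * ((α - ν) • (AmuMat N μ + 1)⁻¹ - Jmat N)


/- ### Auxiliary lemmas ### -/

lemma poch_zero (a : ℝ) : poch a 0 = 1 := by simp [poch]

lemma poch_succ_right (a : ℝ) (m : ℕ) : poch a (m + 1) = poch a m * (a + m) := by
  simp [poch, Finset.prod_range_succ]

lemma poch_succ_left (a : ℝ) (m : ℕ) : poch a (m + 1) = a * poch (a + 1) m := by
  rw [poch, Finset.prod_range_succ']
  simp only [Nat.cast_zero, add_zero, poch]
  rw [mul_comm]
  congr 1
  apply Finset.prod_congr rfl
  intro i _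
  push_cast
  ring

lemma lag_zero (β x : ℝ) : lagP β 0 x = 1 := by
  simp [lagP, poch]

lemma lag_one (β x : ℝ) : lagP β 1 x = β + 1 - x := by
  simp [lagP, Finset.sum_range_succ, poch]
  ring

-- I3
lemma lag_I3 (β x : ℝ) (n : ℕ) :
    lagP β (n + 1) x = lagP (β + 1) (n + 1) x - lagP (β + 1) n x := by
  unfold lagP
  rw [Finset.sum_range_succ, Finset.sum_range_succ (n := n + 1)]
  have hsum : (∑ k ∈ Finset.range (n+1), (-1:ℝ)^k * poch (β + (k:ℝ) + 1) ((n+1) - k) * x ^ k /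
        (((n+1)-k).factorial * k.factorial)) +
      (∑ k ∈ Finset.range (n+1), (-1:ℝ)^k * poch (β + 1 + (k:ℝ) + 1) (n - k) * x ^ k /
        ((n-k).factorial * k.factorial)) =
      (∑ k ∈ Finset.range (n+1), (-1:ℝ)^k * poch (β + 1 + (k:ℝ) + 1) ((n+1) - k) * x ^ k /
        (((n+1)-k).factorial * k.factorial)) := by
    rw [← Finset.sum_add_distrib]
    apply Finset.sum_congr rfl
    intro k hk
    have hk' : k ≤ n := Nat.lt_succ_iff.mp (Finset.mem_range.mp hk)
    obtain ⟨m, hm⟩ : ∃ m, n - k = m := ⟨n - k, rfl⟩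
    have h1 : (n + 1) - k = m + 1 := by omega
    rw [hm, h1]
    have ha : β + 1 + (k:ℝ) + 1 = (β + (k:ℝ) + 1) + 1 := by ring
    rw [ha]
    set a : ℝ := β + (k:ℝ) + 1 with hadef
    rw [poch_succ_left a m, poch_succ_right (a+1) m]
    have hf : (((m+1).factorial : ℕ) : ℝ) = ((m:ℝ)+1) * m.factorial := by
      push_cast [Nat.factorial_succ]; ring
    rw [hf]
    have h2 : (m.factorial : ℝ) ≠ 0 := Nat.cast_ne_zero.mpr (Nat.factorial_ne_zero m)
    have h3 : (k.factorial : ℝ) ≠ 0 := Nat.cast_ne_zero.mpr (Nat.factorial_ne_zero k)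
    have h4 : ((m:ℝ)+1) ≠ 0 := by positivity
    field_simp
    ring
  have htop : ∀ γ : ℝ, (-1 : ℝ) ^ (n+1) * poch γ ((n+1) - (n+1)) * x ^ (n+1) /
      ((((n+1) - (n+1)).factorial : ℕ) * ((n+1).factorial : ℕ)) =
      (-1 : ℝ) ^ (n+1) * x ^ (n+1) / ((n+1).factorial : ℕ) := by
    intro γ; simp [poch]
  rw [htop, htop]
  linarith [hsum]

-- I1 : x L_n^{(β+1)} = (β+n+1) L_n^{(β)} - (n+1) L_{n+1}^{(β)}
lemma lag_I1 (β x : ℝ) (n : ℕ) :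
    x * lagP (β + 1) n x = (β + n + 1) * lagP β n x - ((n:ℝ) + 1) * lagP β (n + 1) x := by
  unfold lagP
  rw [Finset.sum_range_succ (n := n + 1), Finset.sum_range_succ (n := n)]
  -- peel top of LHS sum (k = n) and top of the (n+1)-sum (k = n+1)
  have key : (∑ k ∈ Finset.range n, x * ((-1:ℝ)^k * poch (β + 1 + (k:ℝ) + 1) (n - k) * x ^ k /
        ((n-k).factorial * k.factorial))) =
      ∑ k ∈ Finset.range (n+1),
        ((β + n + 1) * ((-1:ℝ)^k * poch (β + (k:ℝ) + 1) (n - k) * x ^ k /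
          ((n-k).factorial * k.factorial)) -
         ((n:ℝ) + 1) * ((-1:ℝ)^k * poch (β + (k:ℝ) + 1) ((n+1) - k) * x ^ k /
          (((n+1)-k).factorial * k.factorial))) := by
    rw [Finset.sum_range_succ']
    have h0 : (β + n + 1) * ((-1:ℝ)^0 * poch (β + ((0:ℕ):ℝ) + 1) (n - 0) * x ^ 0 /
          ((n-0).factorial * (0:ℕ).factorial)) -
        ((n:ℝ) + 1) * ((-1:ℝ)^0 * poch (β + ((0:ℕ):ℝ) + 1) ((n+1) - 0) * x ^ 0 /
          (((n+1)-0).factorial * (0:ℕ).factorial)) = 0 := by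
      simp only [Nat.cast_zero, add_zero, pow_zero, one_mul, Nat.sub_zero, Nat.factorial_zero,
        Nat.cast_one, mul_one]
      rw [poch_succ_right (β + 1) n]
      have hf : (((n+1).factorial : ℕ) : ℝ) = ((n:ℝ)+1) * n.factorial := by
        push_cast [Nat.factorial_succ]; ring
      rw [hf]
      have h2 : (n.factorial : ℝ) ≠ 0 := Nat.cast_ne_zero.mpr (Nat.factorial_ne_zero n)
      have h4 : ((n:ℝ)+1) ≠ 0 := by positivity
      field_simp
      ring
    rw [h0, add_zero]
    apply Finset.sum_congr rfl
    intro i hi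
    have hi' : i < n := Finset.mem_range.mp hi
    obtain ⟨m, hm⟩ : ∃ m, n - (i+1) = m := ⟨_, rfl⟩
    have h1 : (n + 1) - (i + 1) = m + 1 := by omega
    have h2 : n - i = m + 1 := by omega
    rw [hm, h1, h2]
    have hn : (n:ℝ) = (m:ℝ) + (i:ℝ) + 1 := by exact_mod_cast (by omega : n = m + i + 1)
    have ha : β + (((i+1:ℕ)):ℝ) + 1 = (β + 1 + (i:ℝ) + 1) := by push_cast; ring
    rw [ha]
    set a : ℝ := β + 1 + (i:ℝ) + 1 with hadef
    rw [poch_succ_right a m]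
    have hfm : (((m+1).factorial : ℕ) : ℝ) = ((m:ℝ)+1) * m.factorial := by
      push_cast [Nat.factorial_succ]; ring
    have hfi : (((i+1).factorial : ℕ) : ℝ) = ((i:ℝ)+1) * i.factorial := by
      push_cast [Nat.factorial_succ]; ring
    rw [hfm, hfi, hn]
    have h2' : (m.factorial : ℝ) ≠ 0 := Nat.cast_ne_zero.mpr (Nat.factorial_ne_zero m)
    have h3' : (i.factorial : ℝ) ≠ 0 := Nat.cast_ne_zero.mpr (Nat.factorial_ne_zero i)
    have h4' : ((m:ℝ)+1) ≠ 0 := by positivity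
    have h5' : ((i:ℝ)+1) ≠ 0 := by positivity
    rw [pow_succ, pow_succ]
    field_simp
    ring
  have hkey2 : x * (∑ k ∈ Finset.range n, (-1:ℝ)^k * poch (β + 1 + (k:ℝ) + 1) (n - k) * x ^ k /
        ((n-k).factorial * k.factorial)) =
      (β + n + 1) * (∑ k ∈ Finset.range (n+1), (-1:ℝ)^k * poch (β + (k:ℝ) + 1) (n - k) * x ^ k /
        ((n-k).factorial * k.factorial)) -
      ((n:ℝ) + 1) * (∑ k ∈ Finset.range (n+1), (-1:ℝ)^k * poch (β + (k:ℝ) + 1) ((n+1) - k) * x ^ k /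
        (((n+1)-k).factorial * k.factorial)) := by
    rw [Finset.mul_sum, key, Finset.sum_sub_distrib, Finset.mul_sum, Finset.mul_sum]
  have hcancel : ((n:ℝ) + 1) * ((-1:ℝ)^(n+1) * poch (β + ((n+1:ℕ):ℝ) + 1) ((n+1) - (n+1)) * x ^ (n+1) /
        ((((n+1) - (n+1)).factorial : ℕ) * (((n+1).factorial : ℕ)))) =
      -(x * ((-1:ℝ)^n * poch (β + 1 + (n:ℝ) + 1) (n - n) * x ^ n /
        (((n-n).factorial : ℕ) * ((n.factorial : ℕ))))) := by
    simp only [Nat.sub_self, poch_zero, Nat.factorial_zero, Nat.cast_one, one_mul, mul_one]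
    have hf : (((n+1).factorial : ℕ) : ℝ) = ((n:ℝ)+1) * n.factorial := by
      push_cast [Nat.factorial_succ]; ring
    rw [hf, pow_succ, pow_succ]
    have h2 : (n.factorial : ℝ) ≠ 0 := Nat.cast_ne_zero.mpr (Nat.factorial_ne_zero n)
    have h4 : ((n:ℝ)+1) ≠ 0 := by positivity
    field_simp
  linear_combination hkey2 + hcancel

lemma lag_sum (β x : ℝ) (n : ℕ) :
    ∑ j ∈ Finset.range (n + 1), lagP β j x = lagP (β + 1) n x := by
  induction n with
  | zero => simp [lag_zero]
  | succ n ih =>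
    rw [Finset.sum_range_succ, ih]
    linear_combination lag_I3 β x n

lemma lag_I2 (β x : ℝ) (t : ℕ) :
    ((t:ℝ) + 2) * lagP β (t + 2) x =
      (β + 1 - x) * lagP (β + 1) (t + 1) x - x * lagP (β + 2) t x := by
  have h1 := lag_I1 β x (t + 1)
  have h1' := lag_I1 (β + 1) x t
  have h3 := lag_I3 β x t
  push_cast at h1
  rw [show β + 1 + 1 = β + 2 by ring] at h1'
  linear_combination h1 + h1' + (β + (t:ℝ) + 2) * h3

section MatrixPart
variable {N : ℕ} (μ : Fin N → ℝ)

/-- full lower triangular matrix of ratios; this is `(A_μ + 1)⁻¹`. -/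
def Bmat : Matrix (Fin N) (Fin N) ℝ :=
  Matrix.of fun i j : Fin N => if (j : ℕ) ≤ (i : ℕ) then μ i / μ j else 0

lemma lagMat_apply (α x : ℝ) (i j : Fin N) :
    LagMat N μ α x i j =
      if (j : ℕ) ≤ (i : ℕ) then μ i / μ j * lagP (α + (j : ℕ) + 1) ((i : ℕ) - (j : ℕ)) x
      else 0 := rfl

lemma lagMat_apply_of_lt (α x : ℝ) (i j : Fin N) (h : (i : ℕ) < (j : ℕ)) :
    LagMat N μ α x i j = 0 := by
  rw [lagMat_apply, if_neg (by omega)]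

lemma Amul_zero (X : Matrix (Fin N) (Fin N) ℝ) (i j : Fin N) (hi : (i : ℕ) = 0) :
    (AmuMat N μ * X) i j = 0 := by
  rw [Matrix.mul_apply]
  apply Finset.sum_eq_zero
  intro p _
  have : (i : ℕ) ≠ (p : ℕ) + 1 := by omega
  simp [AmuMat, this]

lemma Amul_succ (X : Matrix (Fin N) (Fin N) ℝ) (i j : Fin N) (m : ℕ) (hm : m < N)
    (hi : (i : ℕ) = m + 1) :
    (AmuMat N μ * X) i j = -(μ i / μ ⟨m, hm⟩ * X ⟨m, hm⟩ j) := by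
  rw [Matrix.mul_apply, Finset.sum_eq_single (⟨m, hm⟩ : Fin N)]
  · simp [AmuMat, hi]
  · intro p _ hp
    have : (i : ℕ) ≠ (p : ℕ) + 1 := by
      intro h; exact hp (Fin.ext (show (p : ℕ) = m by omega))
    simp [AmuMat, this]
  · simp

lemma mulA_succ (X : Matrix (Fin N) (Fin N) ℝ) (i j : Fin N) (hj : (j : ℕ) + 1 < N) :
    (X * AmuMat N μ) i j = -(X i ⟨(j : ℕ) + 1, hj⟩ * (μ ⟨(j : ℕ) + 1, hj⟩ / μ j)) := by
  rw [Matrix.mul_apply, Finset.sum_eq_single (⟨(j : ℕ) + 1, hj⟩ : Fin N)]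
  · simp [AmuMat]
  · intro p _ hp
    have : (p : ℕ) ≠ (j : ℕ) + 1 := by
      intro h; exact hp (Fin.ext (by simpa using h))
    simp [AmuMat, this]
  · simp

lemma mulA_top (X : Matrix (Fin N) (Fin N) ℝ) (i j : Fin N) (hj : (j : ℕ) + 1 = N) :
    (X * AmuMat N μ) i j = 0 := by
  rw [Matrix.mul_apply]
  apply Finset.sum_eq_zero
  intro p _
  have : (p : ℕ) ≠ (j : ℕ) + 1 := by have := p.isLt; omega
  simp [AmuMat, this]

variable (hμ : ∀ k, μ k ≠ 0)
include hμ

lemma inv_A : (AmuMat N μ + 1)⁻¹ = Bmat μ := by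
  apply Matrix.inv_eq_right_inv
  ext i j
  rw [Matrix.add_mul, Matrix.one_mul, Matrix.add_apply]
  rcases Nat.eq_zero_or_eq_succ_pred (i : ℕ) with hi | hi
  · rw [Amul_zero μ _ _ _ hi, zero_add]
    by_cases hij : i = j
    · subst hij
      simp [Bmat, Matrix.one_apply, div_self (hμ i)]
    · have hji : ¬ ((j : ℕ) ≤ (i : ℕ)) := by
        intro h
        exact hij (Fin.ext (by omega))
      simp only [Bmat, Matrix.of_apply, if_neg hji, Matrix.one_apply, if_neg hij, add_zero]
  · set m := (i : ℕ) - 1 with hmdef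
    have hm : m < N := by have := i.isLt; omega
    have hi' : (i : ℕ) = m + 1 := by omega
    rw [Amul_succ μ _ _ _ m hm hi']
    rcases lt_trichotomy ((j : ℕ)) ((i : ℕ)) with h | h | h
    · have h1 : (j : ℕ) ≤ m := by omega
      have h2 : (j : ℕ) ≤ (i : ℕ) := by omega
      have hij : i ≠ j := by intro hh; subst hh; omega
      simp only [Bmat, Matrix.of_apply, if_pos h1, if_pos h2, Matrix.one_apply,
        if_neg hij]
      have e1 := hμ i; have e2 := hμ j; have e3 := hμ (⟨m, hm⟩ : Fin N)
      field_simp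
      ring
    · have hij : i = j := (Fin.ext h).symm
      subst hij
      have h1 : ¬ ((i : ℕ) ≤ m) := by omega
      simp only [Bmat, Matrix.of_apply, if_neg h1, if_pos (le_refl (i:ℕ)),
        Matrix.one_apply_eq, mul_zero, neg_zero, zero_add, div_self (hμ i)]
    · have h1 : ¬ ((j : ℕ) ≤ m) := by omega
      have h2 : ¬ ((j : ℕ) ≤ (i : ℕ)) := by omega
      have hij : i ≠ j := by intro hh; subst hh; omega
      simp only [Bmat, Matrix.of_apply, if_neg h1, if_neg h2, Matrix.one_apply, if_neg hij,
        mul_zero, neg_zero, add_zero]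

lemma BL (α x : ℝ) (i j : Fin N) :
    (Bmat μ * LagMat N μ α x) i j =
      if (j : ℕ) ≤ (i : ℕ) then μ i / μ j * lagP (α + (j : ℕ) + 2) ((i : ℕ) - (j : ℕ)) x
      else 0 := by
  rw [Matrix.mul_apply]
  have step : ∀ p : Fin N, Bmat μ i p * LagMat N μ α x p j =
      (fun q : ℕ => if (j : ℕ) ≤ q ∧ q ≤ (i : ℕ) then
          μ i / μ j * lagP (α + (j : ℕ) + 1) (q - (j : ℕ)) x else 0) (p : ℕ) := by
    intro p
    simp only [Bmat, Matrix.of_apply, lagMat_apply]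
    by_cases h1 : (p : ℕ) ≤ (i : ℕ) <;> by_cases h2 : (j : ℕ) ≤ (p : ℕ)
    · rw [if_pos h1, if_pos h2, if_pos ⟨h2, h1⟩]
      have hp := hμ p
      rw [show μ i / μ p * (μ p / μ j * lagP (α + (j:ℕ) + 1) ((p:ℕ) - (j:ℕ)) x) =
        (μ p / μ p) * (μ i / μ j * lagP (α + (j:ℕ) + 1) ((p:ℕ) - (j:ℕ)) x) by ring,
        div_self hp, one_mul]
    · have h3 : ¬ ((j:ℕ) ≤ (p:ℕ) ∧ (p:ℕ) ≤ (i:ℕ)) := fun hc => h2 hc.1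
      rw [if_pos h1, if_neg h2, if_neg h3, mul_zero]
    · have h3 : ¬ ((j:ℕ) ≤ (p:ℕ) ∧ (p:ℕ) ≤ (i:ℕ)) := fun hc => h1 hc.2
      rw [if_neg h1, if_neg h3, zero_mul]
    · have h3 : ¬ ((j:ℕ) ≤ (p:ℕ) ∧ (p:ℕ) ≤ (i:ℕ)) := fun hc => h1 hc.2
      rw [if_neg h1, if_neg h3, zero_mul]
  rw [Finset.sum_congr rfl (fun p _ => step p)]
  rw [Fin.sum_univ_eq_sum_range (fun q : ℕ => if (j : ℕ) ≤ q ∧ q ≤ (i : ℕ) then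
      μ i / μ j * lagP (α + (j : ℕ) + 1) (q - (j : ℕ)) x else 0) N]
  by_cases hji : (j : ℕ) ≤ (i : ℕ)
  · rw [if_pos hji]
    rw [← Finset.sum_filter]
    have hfe : (Finset.range N).filter (fun q => (j : ℕ) ≤ q ∧ q ≤ (i : ℕ)) =
        Finset.Ico (j : ℕ) ((i : ℕ) + 1) := by
      ext q
      simp only [Finset.mem_filter, Finset.mem_range, Finset.mem_Ico]
      have := i.isLt
      omega
    rw [hfe, Finset.sum_Ico_eq_sum_range]
    have hc : (i : ℕ) + 1 - (j : ℕ) = ((i : ℕ) - (j : ℕ)) + 1 := by omega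
    rw [hc]
    have : ∀ t, (j : ℕ) + t - (j : ℕ) = t := fun t => by omega
    calc (∑ t ∈ Finset.range ((i:ℕ) - (j:ℕ) + 1),
            μ i / μ j * lagP (α + (j : ℕ) + 1) ((j:ℕ) + t - (j:ℕ)) x)
        = ∑ t ∈ Finset.range ((i:ℕ) - (j:ℕ) + 1),
            μ i / μ j * lagP (α + (j : ℕ) + 1) t x := by
          apply Finset.sum_congr rfl; intro t _; rw [this t]
      _ = μ i / μ j * lagP (α + (j : ℕ) + 1 + 1) ((i:ℕ) - (j:ℕ)) x := by
          rw [← Finset.mul_sum, lag_sum]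
      _ = μ i / μ j * lagP (α + (j : ℕ) + 2) ((i:ℕ) - (j:ℕ)) x := by ring_nf
  · rw [if_neg hji]
    apply Finset.sum_eq_zero
    intro q _
    rw [if_neg (by omega)]

end MatrixPart

section Main
variable {N : ℕ} (μ : Fin N → ℝ) (hμ : ∀ k, μ k ≠ 0)
include hμ

lemma part3 (α x : ℝ) :
    (1 + AmuMat N μ) * LagMat N μ α x * (1 - AmuMat N μ) = LagMat N μ α x := by
  ext i j
  rw [Matrix.mul_sub, Matrix.mul_one, Matrix.sub_apply, Matrix.add_mul, Matrix.one_mul,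
    Matrix.add_apply]
  rcases Nat.eq_zero_or_pos (i : ℕ) with hi | hipos
  · rw [Amul_zero μ _ _ _ hi, add_zero]
    by_cases hjN : (j : ℕ) + 1 < N
    · rw [mulA_succ μ _ i j hjN, Matrix.add_apply, Amul_zero μ _ _ _ hi, add_zero,
        lagMat_apply_of_lt μ α x i ⟨(j:ℕ)+1, hjN⟩ (by simp only [Fin.val_mk]; omega)]
      ring
    · rw [mulA_top μ _ i j (by have := j.isLt; omega), sub_zero]
  · set m := (i : ℕ) - 1 with hmdef
    have hm : m < N := by have := i.isLt; omega
    have hi' : (i : ℕ) = m + 1 := by omega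
    rw [Amul_succ μ _ i j m hm hi']
    by_cases hjN : (j : ℕ) + 1 < N
    · rw [mulA_succ μ _ i j hjN, Matrix.add_apply, Amul_succ μ _ i ⟨(j:ℕ)+1, hjN⟩ m hm hi']
      rcases lt_trichotomy ((i:ℕ)) ((j:ℕ)) with h | h | h
      · rw [lagMat_apply_of_lt μ α x (⟨m,hm⟩ : Fin N) j (by simp only [Fin.val_mk]; omega),
          lagMat_apply_of_lt μ α x i ⟨(j:ℕ)+1, hjN⟩ (by simp only [Fin.val_mk]; omega),
          lagMat_apply_of_lt μ α x (⟨m,hm⟩ : Fin N) ⟨(j:ℕ)+1, hjN⟩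
            (by simp only [Fin.val_mk]; omega)]
        ring
      · rw [lagMat_apply_of_lt μ α x (⟨m,hm⟩ : Fin N) j (by simp only [Fin.val_mk]; omega),
          lagMat_apply_of_lt μ α x i ⟨(j:ℕ)+1, hjN⟩ (by simp only [Fin.val_mk]; omega),
          lagMat_apply_of_lt μ α x (⟨m,hm⟩ : Fin N) ⟨(j:ℕ)+1, hjN⟩
            (by simp only [Fin.val_mk]; omega)]
        ring
      · -- j < i, i.e. j ≤ m
        have hjm : (j : ℕ) ≤ m := by omega
        rcases eq_or_lt_of_le hjm with hjm' | hjm'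
        · -- j = m : k = 1
          rw [lagMat_apply_of_lt μ α x (⟨m,hm⟩ : Fin N) ⟨(j:ℕ)+1, hjN⟩
              (by simp only [Fin.val_mk]; omega),
            lagMat_apply μ α x (⟨m,hm⟩ : Fin N) j,
            if_pos (show (j:ℕ) ≤ ((⟨m,hm⟩ : Fin N) : ℕ) by simp only [Fin.val_mk]; omega),
            lagMat_apply μ α x i ⟨(j:ℕ)+1, hjN⟩,
            if_pos (show ((⟨(j:ℕ)+1, hjN⟩ : Fin N) : ℕ) ≤ (i:ℕ) by
              simp only [Fin.val_mk]; omega)]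
          simp only [Fin.val_mk]
          have e1 : ((⟨m,hm⟩ : Fin N) : ℕ) - (j:ℕ) = 0 := by simp only [Fin.val_mk]; omega
          have e2 : (i:ℕ) - ((j:ℕ)+1) = 0 := by omega
          rw [e1, e2, lag_zero, lag_zero]
          have q1 := hμ (⟨m,hm⟩ : Fin N); have q2 := hμ j
          have q3 := hμ (⟨(j:ℕ)+1, hjN⟩ : Fin N); have q4 := hμ i
          field_simp
          ring
        · -- j < m
          have hjm2 : (j:ℕ) + 1 ≤ m := hjm'
          rw [lagMat_apply μ α x (⟨m,hm⟩ : Fin N) j,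
            if_pos (show (j:ℕ) ≤ ((⟨m,hm⟩ : Fin N) : ℕ) by simp only [Fin.val_mk]; omega),
            lagMat_apply μ α x i ⟨(j:ℕ)+1, hjN⟩,
            if_pos (show ((⟨(j:ℕ)+1, hjN⟩ : Fin N) : ℕ) ≤ (i:ℕ) by
              simp only [Fin.val_mk]; omega),
            lagMat_apply μ α x (⟨m,hm⟩ : Fin N) ⟨(j:ℕ)+1, hjN⟩,
            if_pos (show ((⟨(j:ℕ)+1, hjN⟩ : Fin N) : ℕ) ≤ ((⟨m,hm⟩ : Fin N) : ℕ) by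
              simp only [Fin.val_mk]; omega)]
          simp only [Fin.val_mk]
          obtain ⟨t, ht⟩ : ∃ t, m - ((j:ℕ)+1) = t := ⟨_, rfl⟩
          have e1 : m - (j:ℕ) = t + 1 := by omega
          have e2 : (i:ℕ) - ((j:ℕ)+1) = t + 1 := by omega
          rw [e1, e2, ht]
          have harg : α + (((j:ℕ)+1 : ℕ) : ℝ) + 1 = (α + (j:ℕ) + 1) + 1 := by
            push_cast; ring
          rw [harg]
          have h3 := lag_I3 (α + (j:ℕ) + 1) x t
          have q1 := hμ (⟨m,hm⟩ : Fin N); have q2 := hμ j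
          have q3 := hμ (⟨(j:ℕ)+1, hjN⟩ : Fin N); have q4 := hμ i
          field_simp
          set L0 := lagP (α + (j:ℕ) + 1) (t+1) x with hL0
          set La := lagP (α + (j:ℕ) + 1 + 1) (t+1) x with hLa
          set Lb := lagP (α + (j:ℕ) + 1 + 1) t x with hLb
          clear_value L0 La Lb
          set c1 := μ (⟨m,hm⟩ : Fin N) with hc1
          set c2 := μ (⟨(j:ℕ)+1, hjN⟩ : Fin N) with hc2
          clear_value c1 c2
          linear_combination (- μ i) * h3
    · -- j + 1 = N ; then j ≥ m+1 = i or j = ... j = N-1 ≥ i, so cases j=i or j>i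
      rw [mulA_top μ _ i j (by have := j.isLt; omega), sub_zero]
      have hji : (i:ℕ) ≤ (j:ℕ) := by have := i.isLt; omega
      rcases eq_or_lt_of_le hji with h | h
      · rw [lagMat_apply_of_lt μ α x (⟨m,hm⟩ : Fin N) j (by simp only [Fin.val_mk]; omega)]
        ring
      · rw [lagMat_apply_of_lt μ α x (⟨m,hm⟩ : Fin N) j (by simp only [Fin.val_mk]; omega)]
        ring

lemma diag_decomp (α : ℝ) : α • (1 : Matrix (Fin N) (Fin N) ℝ) + Jmat N =
    Matrix.diagonal (fun p : Fin N => α + ((p : ℕ) + 1)) := by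
  ext i j
  by_cases h : i = j
  · subst h; simp [Jmat, Matrix.one_apply]
  · simp [Jmat, Matrix.one_apply, h, Matrix.diagonal_apply_ne _ h]

lemma part1 (α x : ℝ) :
    LagMat N μ α x * Jmat N =
      (x • Bmat μ - x • (1 : Matrix (Fin N) (Fin N) ℝ) +
          (α • (1 : Matrix (Fin N) (Fin N) ℝ) + Jmat N) * AmuMat N μ + Jmat N) *
        LagMat N μ α x := by
  rw [diag_decomp μ hμ]
  rw [Matrix.add_mul, Matrix.add_mul, Matrix.sub_mul, Matrix.smul_mul, Matrix.smul_mul,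
    Matrix.one_mul, Matrix.mul_assoc]
  ext i j
  simp only [Matrix.add_apply, Matrix.sub_apply, Matrix.smul_apply, smul_eq_mul, Jmat,
    Matrix.mul_diagonal, Matrix.diagonal_mul, BL μ hμ α x i j]
  rcases Nat.eq_zero_or_pos (i : ℕ) with hi | hipos
  · rw [Amul_zero μ _ _ _ hi]
    by_cases hji : (j : ℕ) ≤ (i : ℕ)
    · have hji' : (j : ℕ) = (i : ℕ) := by omega
      have hk : (i : ℕ) - (j : ℕ) = 0 := by omega
      rw [if_pos hji, lagMat_apply, if_pos hji, hk, lag_zero, lag_zero]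
      have : ((j:ℝ)) = ((i:ℝ)) := by exact_mod_cast hji'
      push_cast
      rw [this]
      ring
    · rw [if_neg hji, lagMat_apply, if_neg hji]
      ring
  · set m := (i : ℕ) - 1 with hmdef
    have hm : m < N := by have := i.isLt; omega
    have hi' : (i : ℕ) = m + 1 := by omega
    rw [Amul_succ μ _ i j m hm hi']
    by_cases hji : (j : ℕ) ≤ (i : ℕ)
    · rw [if_pos hji, lagMat_apply, if_pos hji]
      rcases eq_or_lt_of_le hji with hji' | hji'
      · -- j = i, k = 0
        have hk : (i : ℕ) - (j : ℕ) = 0 := by omega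
        rw [lagMat_apply_of_lt μ α x (⟨m,hm⟩ : Fin N) j (by simp only [Fin.val_mk]; omega),
          hk, lag_zero, lag_zero]
        have : ((j:ℝ)) = ((i:ℝ)) := by exact_mod_cast hji'
        push_cast
        rw [this]
        ring
      · -- j < i : k = t+1 ≥ 1
        have hjm : (j : ℕ) ≤ m := by omega
        rw [lagMat_apply μ α x (⟨m,hm⟩ : Fin N) j,
          if_pos (show (j:ℕ) ≤ ((⟨m,hm⟩ : Fin N) : ℕ) by simp only [Fin.val_mk]; omega)]
        simp only [Fin.val_mk]
        obtain ⟨t, ht⟩ : ∃ t, m - (j:ℕ) = t := ⟨_, rfl⟩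
        have e1 : (i:ℕ) - (j:ℕ) = t + 1 := by omega
        rw [e1, ht]
        rw [show α + ((j:ℕ):ℝ) + 2 = α + ((j:ℕ):ℝ) + 1 + 1 by ring]
        have h3 := lag_I3 (α + ((j:ℕ):ℝ) + 1) x t
        have h1 := lag_I1 (α + ((j:ℕ):ℝ) + 1) x t
        have hit : ((i:ℕ):ℝ) = ((j:ℕ):ℝ) + (t:ℝ) + 1 := by
          exact_mod_cast (show (i:ℕ) = (j:ℕ) + t + 1 by omega)
        have q1 := hμ (⟨m,hm⟩ : Fin N); have q2 := hμ j; have q4 := hμ i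
        field_simp
        rw [hit]
        set c1 := μ (⟨m,hm⟩ : Fin N) with hc1
        set L0 := lagP (α + ((j:ℕ):ℝ) + 1) (t+1) x with hL0
        set La := lagP (α + ((j:ℕ):ℝ) + 1 + 1) (t+1) x with hLa
        set Lb := lagP (α + ((j:ℕ):ℝ) + 1 + 1) t x with hLb
        set Lc := lagP (α + ((j:ℕ):ℝ) + 1) t x with hLc
        clear_value c1 L0 La Lb Lc
        linear_combination x * h3 - h1
    · rw [if_neg hji, lagMat_apply, if_neg hji,
        lagMat_apply_of_lt μ α x (⟨m,hm⟩ : Fin N) j (by simp only [Fin.val_mk]; omega)]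
      ring

lemma diag_decomp2 (α x : ℝ) : α • (1 : Matrix (Fin N) (Fin N) ℝ) + Jmat N -
    x • (1 : Matrix (Fin N) (Fin N) ℝ) =
    Matrix.diagonal (fun p : Fin N => α + ((p : ℕ) + 1) - x) := by
  ext i j
  by_cases h : i = j
  · subst h; simp [Jmat, Matrix.one_apply]
  · simp [Jmat, Matrix.one_apply, h, Matrix.diagonal_apply_ne _ h]

lemma part2 (α x : ℝ) :
    Jmat N * LagMat N μ α x =
      LagMat N μ α x *
        (Jmat N - (α • (1 : Matrix (Fin N) (Fin N) ℝ) + Jmat N -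
            x • (1 : Matrix (Fin N) (Fin N) ℝ)) * AmuMat N μ - x • AmuMat N μ ^ 2) := by
  rw [diag_decomp2 μ hμ, Matrix.mul_sub, Matrix.mul_sub, Matrix.mul_smul, sq,
    ← Matrix.mul_assoc, ← Matrix.mul_assoc]
  ext i j
  simp only [Matrix.sub_apply, Matrix.smul_apply, smul_eq_mul, Jmat,
    Matrix.mul_diagonal, Matrix.diagonal_mul]
  by_cases hjN : (j : ℕ) + 1 < N
  · rw [mulA_succ μ (LagMat N μ α x * Matrix.diagonal (fun p : Fin N => α + ((p : ℕ) + 1) - x))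
        i j hjN,
      mulA_succ μ (LagMat N μ α x * AmuMat N μ) i j hjN, Matrix.mul_diagonal]
    by_cases hji : (j : ℕ) ≤ (i : ℕ)
    · rcases eq_or_lt_of_le hji with hji' | hji'
      · -- i = j (k = 0)
        rw [lagMat_apply_of_lt μ α x i ⟨(j:ℕ)+1, hjN⟩ (by simp only [Fin.val_mk]; omega)]
        by_cases hjN2 : (j : ℕ) + 1 + 1 < N
        · rw [mulA_succ μ (LagMat N μ α x) i ⟨(j:ℕ)+1, hjN⟩ hjN2,
            lagMat_apply_of_lt μ α x i ⟨(j:ℕ)+1+1, hjN2⟩ (by simp only [Fin.val_mk]; omega)]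
          have : ((j:ℝ)) = ((i:ℝ)) := by exact_mod_cast hji'
          push_cast
          rw [this]; ring
        · rw [mulA_top μ (LagMat N μ α x) i ⟨(j:ℕ)+1, hjN⟩ (by simp only [Fin.val_mk]; omega)]
          have : ((j:ℝ)) = ((i:ℝ)) := by exact_mod_cast hji'
          push_cast
          rw [this]; ring
      · rcases eq_or_lt_of_le (show (j:ℕ) + 1 ≤ (i:ℕ) by omega) with hji2 | hji2
        · -- i = j+1 (k = 1)
          rw [lagMat_apply μ α x i j, if_pos hji,
            lagMat_apply μ α x i ⟨(j:ℕ)+1, hjN⟩,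
            if_pos (show ((⟨(j:ℕ)+1, hjN⟩ : Fin N) : ℕ) ≤ (i:ℕ) by
              simp only [Fin.val_mk]; omega)]
          simp only [Fin.val_mk]
          have e1 : (i:ℕ) - (j:ℕ) = 1 := by omega
          have e2 : (i:ℕ) - ((j:ℕ)+1) = 0 := by omega
          rw [e1, e2, lag_zero, lag_one]
          by_cases hjN2 : (j : ℕ) + 1 + 1 < N
          · rw [mulA_succ μ (LagMat N μ α x) i ⟨(j:ℕ)+1, hjN⟩ hjN2,
              lagMat_apply_of_lt μ α x i ⟨(j:ℕ)+1+1, hjN2⟩ (by simp only [Fin.val_mk]; omega)]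
            have hfj : ((i:ℕ):ℝ) = ((j:ℕ):ℝ) + 1 := by
              exact_mod_cast (show (i:ℕ) = (j:ℕ) + 1 by omega)
            have q2 := hμ j; have q4 := hμ i
            have q3 := hμ (⟨(j:ℕ)+1, hjN⟩ : Fin N)
            push_cast
            rw [hfj]
            field_simp
            ring
          · rw [mulA_top μ (LagMat N μ α x) i ⟨(j:ℕ)+1, hjN⟩ (by simp only [Fin.val_mk]; omega)]
            have hfj : ((i:ℕ):ℝ) = ((j:ℕ):ℝ) + 1 := by
              exact_mod_cast (show (i:ℕ) = (j:ℕ) + 1 by omega)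
            have q2 := hμ j; have q4 := hμ i
            have q3 := hμ (⟨(j:ℕ)+1, hjN⟩ : Fin N)
            push_cast
            rw [hfj]
            field_simp
            ring
        · -- j+2 ≤ i (k = t+2)
          have hjN2 : (j : ℕ) + 1 + 1 < N := by have := i.isLt; omega
          rw [mulA_succ μ (LagMat N μ α x) i ⟨(j:ℕ)+1, hjN⟩ hjN2,
            lagMat_apply μ α x i j, if_pos hji,
            lagMat_apply μ α x i ⟨(j:ℕ)+1, hjN⟩,
            if_pos (show ((⟨(j:ℕ)+1, hjN⟩ : Fin N) : ℕ) ≤ (i:ℕ) by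
              simp only [Fin.val_mk]; omega),
            lagMat_apply μ α x i ⟨(j:ℕ)+1+1, hjN2⟩,
            if_pos (show ((⟨(j:ℕ)+1+1, hjN2⟩ : Fin N) : ℕ) ≤ (i:ℕ) by
              simp only [Fin.val_mk]; omega)]
          simp only [Fin.val_mk]
          obtain ⟨t, ht⟩ : ∃ t, (i:ℕ) - ((j:ℕ)+1+1) = t := ⟨_, rfl⟩
          have e1 : (i:ℕ) - (j:ℕ) = t + 2 := by omega
          have e2 : (i:ℕ) - ((j:ℕ)+1) = t + 1 := by omega
          rw [e1, e2, ht]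
          have harg1 : α + (((j:ℕ)+1 : ℕ) : ℝ) + 1 = (α + ((j:ℕ):ℝ) + 1) + 1 := by
            push_cast; ring
          have harg2 : α + (((j:ℕ)+1+1 : ℕ) : ℝ) + 1 = (α + ((j:ℕ):ℝ) + 1) + 2 := by
            push_cast; ring
          rw [harg1, harg2]
          have h2 := lag_I2 (α + ((j:ℕ):ℝ) + 1) x t
          have hit : ((i:ℕ):ℝ) = ((j:ℕ):ℝ) + (t:ℝ) + 2 := by
            exact_mod_cast (show (i:ℕ) = (j:ℕ) + t + 2 by omega)
          have q2 := hμ j; have q4 := hμ i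
          have q3 := hμ (⟨(j:ℕ)+1, hjN⟩ : Fin N)
          have q5 := hμ (⟨(j:ℕ)+1+1, hjN2⟩ : Fin N)
          rw [hit]
          field_simp
          set c1 := μ (⟨(j:ℕ)+1, hjN⟩ : Fin N) with hc1
          set c2 := μ (⟨(j:ℕ)+1+1, hjN2⟩ : Fin N) with hc2
          set L0 := lagP (α + ((j:ℕ):ℝ) + 1) (t+2) x with hL0
          set La := lagP (α + ((j:ℕ):ℝ) + 1 + 1) (t+1) x with hLa
          set Lb := lagP (α + ((j:ℕ):ℝ) + 1 + 2) t x with hLb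
          clear_value c1 c2 L0 La Lb
          push_cast
          linear_combination h2
    · -- i < j : everything vanishes
      rw [lagMat_apply_of_lt μ α x i j (by omega),
        lagMat_apply_of_lt μ α x i ⟨(j:ℕ)+1, hjN⟩ (by simp only [Fin.val_mk]; omega)]
      by_cases hjN2 : (j : ℕ) + 1 + 1 < N
      · rw [mulA_succ μ (LagMat N μ α x) i ⟨(j:ℕ)+1, hjN⟩ hjN2,
          lagMat_apply_of_lt μ α x i ⟨(j:ℕ)+1+1, hjN2⟩ (by simp only [Fin.val_mk]; omega)]
        ring
      · rw [mulA_top μ (LagMat N μ α x) i ⟨(j:ℕ)+1, hjN⟩ (by simp only [Fin.val_mk]; omega)]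
        ring
  · -- j+1 = N
    have hjN' : (j:ℕ) + 1 = N := by have := j.isLt; omega
    rw [mulA_top μ _ i j hjN', mulA_top μ _ i j hjN']
    have hji : (i:ℕ) ≤ (j:ℕ) := by have := i.isLt; omega
    rcases eq_or_lt_of_le hji with h | h
    · have : ((j:ℝ)) = ((i:ℝ)) := by exact_mod_cast h.symm
      push_cast
      rw [this]; ring
    · rw [lagMat_apply_of_lt μ α x i j h]
      ring
end Main


/-- commutation relations for `L_μ^{(α)}`, `A_μ` and `J`. -/
theorem commutation_relations (N : ℕ) (hN : 1 ≤ N) (μ : Fin N → ℝ) (hμ : ∀ k, μ k ≠ 0)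
    (α x : ℝ) :
    (LagMat N μ α x * Jmat N =
      (x • (AmuMat N μ + 1)⁻¹ - x • (1 : Matrix (Fin N) (Fin N) ℝ) +
          (α • (1 : Matrix (Fin N) (Fin N) ℝ) + Jmat N) * AmuMat N μ + Jmat N) *
        LagMat N μ α x) ∧
    (Jmat N * LagMat N μ α x =
      LagMat N μ α x *
        (Jmat N - (α • (1 : Matrix (Fin N) (Fin N) ℝ) + Jmat N -
            x • (1 : Matrix (Fin N) (Fin N) ℝ)) * AmuMat N μ - x • AmuMat N μ ^ 2)) ∧
    ((1 + AmuMat N μ) * LagMat N μ α x * (1 - AmuMat N μ) = LagMat N μ α x) := by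
  refine ⟨?_, ?_, ?_⟩
  · rw [inv_A μ hμ]
    exact part1 μ hμ α x
  · exact part2 μ hμ α x
  · exact part3 μ hμ α x
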